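/- Under the same SSP multistep setting (α_j, β_j ≥ 0, ∑ α_j = 1, β_j = 0 if α_j = 0, φ(Δt) ≤ C·B_FE with C = min_j α_j/β_j), suppose the forward Euler step with step h ≤ B_FE preserves the interval (A, B) for component k and satisfies v_k + h·f_k(v) ≥ v_k whenever v_k ∈ (A, B). If the starting values satisfy u_k^0, ..., u_k^{s-1} ∈ (A, B), then for every n ≥ s: u_k^{n+1} ≥ min{u_k^{n-s+1}, u_k^{n-s+2}, ..., u_k^n}, for any step size Δt ≥ 0. -/

import Mathlib

/-- weak monotonicity preservation by the SSP-form nonstandard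
multistep method: u_k^{n+1} is bounded below by the minimum of the previous s values. -/
theorem multistep_weak_monotonicity (m s : ℕ) (hs : 1 ≤ s)
    (f : (Fin m → ℝ) → (Fin m → ℝ)) (k : Fin m) (A B BFE : ℝ) (hBFE : 0 < BFE)
    (heuler : ∀ v : Fin m → ℝ, v k ∈ Set.Ioo A B → ∀ h : ℝ, 0 < h → h ≤ BFE →
      (v k + h * f v k ∈ Set.Ioo A B ∧ v k ≤ v k + h * f v k))
    (α β : Fin s → ℝ) (hα : ∀ j, 0 ≤ α j) (hβ : ∀ j, 0 ≤ β j)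
    (hβα : ∀ j, α j = 0 → β j = 0) (hsum : ∑ j, α j = 1)
    (φΔt : ℝ) (hφ0 : 0 ≤ φΔt) (hφ : ∀ j, β j ≠ 0 → φΔt ≤ α j / β j * BFE)
    (u : ℕ → Fin m → ℝ)
    (hrec : ∀ n, s - 1 ≤ n → u (n+1) = fun i =>
      ∑ j, (α j * u (n - j.val) i + φΔt * β j * f (u (n - j.val)) i))
    (hinit : ∀ n < s, u n k ∈ Set.Ioo A B) :
    ∀ n, ∀ hn : s ≤ n,
      (Finset.Icc (n - s + 1) n).inf'
        (Finset.nonempty_Icc.mpr (by omega)) (fun ℓ => u ℓ k) ≤ u (n+1) k := by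
  -- some α j is nonzero
  obtain ⟨j₀, hj₀⟩ : ∃ j, α j ≠ 0 := by
    by_contra h
    push_neg at h
    simp [h] at hsum
  -- per-stage lemma: each term is α j * w with w ∈ Ioo, w ≥ u value
  have key : ∀ n, (∀ j : Fin s, u (n - j.val) k ∈ Set.Ioo A B) → ∀ j : Fin s,
      ∃ w : ℝ, α j * u (n - j.val) k + φΔt * β j * f (u (n - j.val)) k = α j * w ∧
        w ∈ Set.Ioo A B ∧ u (n - j.val) k ≤ w := by
    intro n hmem j
    by_cases hc : φΔt * β j = 0
    · refine ⟨u (n - j.val) k, ?_, hmem j, le_refl _⟩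
      rw [hc, zero_mul, add_zero]
    · have hφpos : 0 < φΔt := lt_of_le_of_ne hφ0 (by
        intro h; exact hc (by rw [← h, zero_mul]))
      have hβj : β j ≠ 0 := by
        intro h; exact hc (by rw [h, mul_zero])
      have hβjpos : 0 < β j := lt_of_le_of_ne (hβ j) (Ne.symm hβj)
      have hαj : α j ≠ 0 := by
        intro h; exact hβj (hβα j h)
      have hαjpos : 0 < α j := lt_of_le_of_ne (hα j) (Ne.symm hαj)
      set h : ℝ := φΔt * β j / α j with hh
      have hpos : 0 < h := div_pos (mul_pos hφpos hβjpos) hαjpos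
      have h1 : φΔt * β j ≤ α j * BFE := by
        have h2 := hφ j hβj
        rw [div_mul_eq_mul_div, le_div_iff₀ hβjpos] at h2
        linarith
      have hle : h ≤ BFE := by
        rw [hh, div_le_iff₀ hαjpos]
        linarith
      obtain ⟨hmem', hge⟩ := heuler (u (n - j.val)) (hmem j) h hpos hle
      refine ⟨u (n - j.val) k + h * f (u (n - j.val)) k, ?_, hmem', hge⟩
      rw [hh]
      field_simp
  -- per-step lemma
  have step : ∀ n, s - 1 ≤ n → (∀ j : Fin s, u (n - j.val) k ∈ Set.Ioo A B) →
      u (n+1) k ∈ Set.Ioo A B ∧ (∑ j, α j * u (n - j.val) k) ≤ u (n+1) k := by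
    intro n hn hmem
    choose w hw1 hw2 hw3 using key n hmem
    have heq : u (n+1) k = ∑ j, α j * w j := by
      have := congrFun (hrec n hn) k
      rw [this]
      exact Finset.sum_congr rfl (fun j _ => hw1 j)
    have hsumA : ∑ j : Fin s, α j * A = A := by rw [← Finset.sum_mul, hsum, one_mul]
    have hsumB : ∑ j : Fin s, α j * B = B := by rw [← Finset.sum_mul, hsum, one_mul]
    have hj₀pos : 0 < α j₀ := lt_of_le_of_ne (hα j₀) (Ne.symm hj₀)
    have hlow : ∑ j : Fin s, α j * A < ∑ j : Fin s, α j * w j := by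
      apply Finset.sum_lt_sum
      · intro i _
        exact mul_le_mul_of_nonneg_left (le_of_lt (hw2 i).1) (hα i)
      · exact ⟨j₀, Finset.mem_univ _, mul_lt_mul_of_pos_left (hw2 j₀).1 hj₀pos⟩
    have hhigh : ∑ j : Fin s, α j * w j < ∑ j : Fin s, α j * B := by
      apply Finset.sum_lt_sum
      · intro i _
        exact mul_le_mul_of_nonneg_left (le_of_lt (hw2 i).2) (hα i)
      · exact ⟨j₀, Finset.mem_univ _, mul_lt_mul_of_pos_left (hw2 j₀).2 hj₀pos⟩
    have hmono : ∑ j : Fin s, α j * u (n - j.val) k ≤ ∑ j : Fin s, α j * w j :=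
      Finset.sum_le_sum (fun i _ => mul_le_mul_of_nonneg_left (hw3 i) (hα i))
    rw [heq]
    exact ⟨⟨by rw [← hsumA]; exact hlow, by rw [← hsumB]; exact hhigh⟩, hmono⟩
  -- invariance
  have inv : ∀ n, u n k ∈ Set.Ioo A B := by
    intro n
    induction n using Nat.strong_induction_on with
    | _ n ih =>
      by_cases h : n < s
      · exact hinit n h
      · push_neg at h
        obtain ⟨p, rfl⟩ : ∃ p, n = p + 1 := ⟨n - 1, by omega⟩
        exact (step p (by omega) (fun j => ih (p - j.val) (by omega))).1
  -- conclusion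
  intro n hn
  have hbd := (step n (by omega) (fun j => inv _)).2
  refine le_trans ?_ hbd
  have hinf : ∀ j : Fin s,
      (Finset.Icc (n - s + 1) n).inf' (Finset.nonempty_Icc.mpr (by omega))
        (fun ℓ => u ℓ k) ≤ u (n - j.val) k := by
    intro j
    apply Finset.inf'_le
    rw [Finset.mem_Icc]
    have := j.isLt
    omega
  have h1 : (Finset.Icc (n - s + 1) n).inf' (Finset.nonempty_Icc.mpr (by omega))
      (fun ℓ => u ℓ k) = ∑ j : Fin s, α j * (Finset.Icc (n - s + 1) n).inf'
        (Finset.nonempty_Icc.mpr (by omega)) (fun ℓ => u ℓ k) := by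
    rw [← Finset.sum_mul, hsum, one_mul]
  rw [h1]
  exact Finset.sum_le_sum (fun i _ => mul_le_mul_of_nonneg_left (hinf i) (hα i))
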